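/- Let V be a k-vector space and, for a bounded open interval (a,b) ⊆ ℝ, let 𝕍(a,b) be the cone of Q : Map((a,b−1)∩ℤ, V) → Map((a,b)∩ℤ, V), (Qg)(x) = g(x−1) − g(x) (with g extended by zero outside (a,b−1)). If (a,b) ∩ ℤ ≠ ∅ then for any t ∈ (a,b) ∩ ℤ the map V → H⁰(𝕍(a,b)) sending v to the class of the delta function δ_t v is an isomorphism, and H^{-1}(𝕍(a,b)) = 0; moreover the isomorphism is independent of the choice of t. -/

import Mathlib

/-- The finite-difference differential of the discrete complex `𝕍(a,b)`:
`(Q g)(x) = g(x−1) − g(x)`, with `g` defined on `(a, b−1) ∩ ℤ` extended by zero. -/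
noncomputable def Qdisc {V : Type*} [AddCommGroup V] (a b : ℝ)
    (g : {x : ℤ // a < (x : ℝ) ∧ (x : ℝ) < b - 1} → V) :
    {x : ℤ // a < (x : ℝ) ∧ (x : ℝ) < b} → V :=
  fun x =>
    (if h : a < ((x.1 - 1 : ℤ) : ℝ) ∧ ((x.1 - 1 : ℤ) : ℝ) < b - 1 then g ⟨x.1 - 1, h⟩ else 0) -
    (if h : a < (x.1 : ℝ) ∧ (x.1 : ℝ) < b - 1 then g ⟨x.1, h⟩ else 0)

section aux
variable {V : Type*} [AddCommGroup V]

private lemma memIoc (a b : ℝ) (x : ℤ) :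
    x ∈ Finset.Ioc ⌊a⌋ (⌈b⌉ - 1) ↔ (a < (x : ℝ) ∧ (x : ℝ) < b) := by
  rw [Finset.mem_Ioc, Int.floor_lt, show x ≤ ⌈b⌉ - 1 ↔ x < ⌈b⌉ by omega, Int.lt_ceil]

private lemma tele (G : ℤ → V) (m n : ℤ) (hmn : m ≤ n) :
    ∑ x ∈ Finset.Ioc m n, (G (x - 1) - G x) = G m - G n := by
  refine Int.le_induction (motive := fun n _ => ∑ x ∈ Finset.Ioc m n, (G (x - 1) - G x) = G m - G n)
    ?_ ?_ n hmn
  · simp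
  · intro n hn ih
    have h1 : Finset.Ioc m (n + 1) = insert (n + 1) (Finset.Ioc m n) := by
      ext x; simp only [Finset.mem_Ioc, Finset.mem_insert]; omega
    rw [h1, Finset.sum_insert (by simp), ih, show n + 1 - 1 = n by ring]
    abel

private lemma sum_succ (H : ℤ → V) (m y : ℤ) (hy : m < y) :
    ∑ x ∈ Finset.Ioc m y, H x = (∑ x ∈ Finset.Ioc m (y - 1), H x) + H y := by
  have h1 : Finset.Ioc m y = insert y (Finset.Ioc m (y - 1)) := by
    ext x; simp only [Finset.mem_Ioc, Finset.mem_insert]; omega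
  rw [h1, Finset.sum_insert (by simp)]; abel

/-- the sum of the zero-extension of `Qdisc g` over `(a,b)∩ℤ` vanishes (telescoping). -/
private lemma sum_Q (a b : ℝ) (g : {x : ℤ // a < (x : ℝ) ∧ (x : ℝ) < b - 1} → V)
    (hab : ⌊a⌋ ≤ ⌈b⌉ - 1) :
    ∑ x ∈ Finset.Ioc ⌊a⌋ (⌈b⌉ - 1),
      (if hx : a < (x : ℝ) ∧ (x : ℝ) < b then Qdisc a b g ⟨x, hx⟩ else 0) = 0 := by
  have hceil := Int.le_ceil b
  have hfloor := Int.floor_le a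
  set G : ℤ → V := fun y => if hy : a < (y : ℝ) ∧ (y : ℝ) < b - 1 then g ⟨y, hy⟩ else 0 with hG
  have h1 : ∀ x ∈ Finset.Ioc ⌊a⌋ (⌈b⌉ - 1),
      (if hx : a < (x : ℝ) ∧ (x : ℝ) < b then Qdisc a b g ⟨x, hx⟩ else 0) = G (x - 1) - G x := by
    intro x hx
    rw [dif_pos ((memIoc a b x).mp hx)]
    rfl
  rw [Finset.sum_congr rfl h1, tele G _ _ hab]
  have hGa : G ⌊a⌋ = 0 := dif_neg (by push_neg; intro hc; exfalso; linarith)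
  have hGb : G (⌈b⌉ - 1) = 0 := dif_neg (by push_neg; intro _; push_cast; linarith)
  rw [hGa, hGb, sub_zero]

/-- any function on `(a,b)∩ℤ` with zero total sum is in the image of `Qdisc`. -/
private lemma exists_g (a b : ℝ) (h : {x : ℤ // a < (x : ℝ) ∧ (x : ℝ) < b} → V)
    (hsum : ∑ x ∈ Finset.Ioc ⌊a⌋ (⌈b⌉ - 1),
      (if hx : a < (x : ℝ) ∧ (x : ℝ) < b then h ⟨x, hx⟩ else 0) = 0) :
    ∃ g : {x : ℤ // a < (x : ℝ) ∧ (x : ℝ) < b - 1} → V,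
      ∀ x, h x = Qdisc a b g x := by
  have hceil := Int.le_ceil b
  have hfloor := Int.floor_le a
  set H : ℤ → V := fun x => if hx : a < (x : ℝ) ∧ (x : ℝ) < b then h ⟨x, hx⟩ else 0 with hH
  refine ⟨fun y => -∑ x ∈ Finset.Ioc ⌊a⌋ y.1, H x, ?_⟩
  rintro ⟨x, hx1, hx2⟩
  have hfl : ⌊a⌋ < x := Int.floor_lt.mpr hx1
  have hcl : x < ⌈b⌉ := Int.lt_ceil.mpr hx2
  have hHx : H x = h ⟨x, hx1, hx2⟩ := dif_pos ⟨hx1, hx2⟩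
  simp only [Qdisc]
  push_cast
  split_ifs with h1 h2 h2
  · -- interior point
    rw [← hHx, sum_succ H ⌊a⌋ x hfl]
    abel
  · -- top point: x = ⌈b⌉ - 1
    have hB : b - 1 ≤ (x : ℝ) := by
      by_contra hc; push_neg at hc; exact h2 ⟨hx1, hc⟩
    have hxtop : x = ⌈b⌉ - 1 := by
      have hc2 : ⌈b⌉ ≤ x + 1 := Int.ceil_le.mpr (by push_cast; linarith)
      omega
    rw [← hHx]
    rw [show (Finset.Ioc ⌊a⌋ (⌈b⌉ - 1)) = Finset.Ioc ⌊a⌋ x by rw [hxtop],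
        sum_succ H ⌊a⌋ x hfl] at hsum
    have hs : ∑ y ∈ Finset.Ioc ⌊a⌋ (x - 1), H y = -H x :=
      eq_neg_of_add_eq_zero_left hsum
    rw [hs]; abel
  · -- bottom point: x = ⌊a⌋ + 1
    have hA : (x : ℝ) - 1 ≤ a := by
      by_contra hc; push_neg at hc; exact h1 ⟨hc, by linarith⟩
    have hxbot : x = ⌊a⌋ + 1 := by
      have hc2 : x - 1 ≤ ⌊a⌋ := Int.le_floor.mpr (by push_cast; linarith)
      omega
    rw [← hHx, sum_succ H ⌊a⌋ x hfl, show x - 1 = ⌊a⌋ by omega, Finset.Ioc_self,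
        Finset.sum_empty]
    abel
  · -- single point: x = ⌊a⌋ + 1 = ⌈b⌉ - 1
    have hB : b - 1 ≤ (x : ℝ) := by
      by_contra hc; push_neg at hc; exact h2 ⟨hx1, hc⟩
    have hA : (x : ℝ) - 1 ≤ a := by
      by_contra hc; push_neg at hc; exact h1 ⟨hc, by linarith⟩
    have hxtop : x = ⌈b⌉ - 1 := by
      have hc2 : ⌈b⌉ ≤ x + 1 := Int.ceil_le.mpr (by push_cast; linarith)
      omega
    have hxbot : x = ⌊a⌋ + 1 := by
      have hc2 : x - 1 ≤ ⌊a⌋ := Int.le_floor.mpr (by push_cast; linarith)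
      omega
    rw [← hHx]
    rw [show (Finset.Ioc ⌊a⌋ (⌈b⌉ - 1)) = Finset.Ioc ⌊a⌋ x by rw [hxtop],
        sum_succ H ⌊a⌋ x hfl, show x - 1 = ⌊a⌋ by omega, Finset.Ioc_self,
        Finset.sum_empty, zero_add] at hsum
    rw [hsum]; abel

end aux

/-- If `(a,b) ∩ ℤ ≠ ∅` then `v ↦ [δ_t v]` is an isomorphism `V ≅ H⁰(𝕍(a,b))`
(injective modulo the image of `Q`, surjective modulo the image of `Q`),
`H^{-1}(𝕍(a,b)) = 0` (i.e. `Q` is injective), and the map is independent of the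
choice of `t ∈ (a,b) ∩ ℤ`. -/
theorem stmt_19 {k V : Type*} [Field k] [AddCommGroup V] [Module k V]
    (a b : ℝ) (t : ℤ) (ht : a < (t : ℝ) ∧ (t : ℝ) < b) :
    (∀ v : V,
      (∃ g : {x : ℤ // a < (x : ℝ) ∧ (x : ℝ) < b - 1} → V,
        (fun x : {x : ℤ // a < (x : ℝ) ∧ (x : ℝ) < b} => if x.1 = t then v else 0) =
          Qdisc a b g) → v = 0) ∧
    (∀ f : {x : ℤ // a < (x : ℝ) ∧ (x : ℝ) < b} → V,
      ∃ (v : V) (g : {x : ℤ // a < (x : ℝ) ∧ (x : ℝ) < b - 1} → V),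
        ∀ x, f x = (if x.1 = t then v else 0) + Qdisc a b g x) ∧
    (∀ g : {x : ℤ // a < (x : ℝ) ∧ (x : ℝ) < b - 1} → V, Qdisc a b g = 0 → g = 0) ∧
    (∀ s : ℤ, a < (s : ℝ) → (s : ℝ) < b → ∀ v : V,
      ∃ g : {x : ℤ // a < (x : ℝ) ∧ (x : ℝ) < b - 1} → V,
        ∀ x : {x : ℤ // a < (x : ℝ) ∧ (x : ℝ) < b},
          (if x.1 = t then v else 0) - (if x.1 = s then v else 0) = Qdisc a b g x) := by
  have hab : ⌊a⌋ ≤ ⌈b⌉ - 1 := by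
    have h1 : ⌊a⌋ < t := Int.floor_lt.mpr ht.1
    have h2 : t < ⌈b⌉ := Int.lt_ceil.mpr ht.2
    omega
  have htmem : t ∈ Finset.Ioc ⌊a⌋ (⌈b⌉ - 1) := (memIoc a b t).mpr ht
  refine ⟨?_, ?_, ?_, ?_⟩
  · -- injectivity of v ↦ [δ_t v]
    rintro v ⟨g, hg⟩
    have hpt : ∀ (x : ℤ) (hx : a < (x : ℝ) ∧ (x : ℝ) < b),
        (if x = t then v else 0) = Qdisc a b g ⟨x, hx⟩ := fun x hx => congrFun hg ⟨x, hx⟩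
    have hδ : ∑ x ∈ Finset.Ioc ⌊a⌋ (⌈b⌉ - 1),
        (if hx : a < (x : ℝ) ∧ (x : ℝ) < b then (if x = t then v else 0) else 0) = v := by
      rw [Finset.sum_congr rfl (fun x hx => dif_pos ((memIoc a b x).mp hx)),
          Finset.sum_ite_eq' _ t (fun _ => v), if_pos htmem]
    have key : ∑ x ∈ Finset.Ioc ⌊a⌋ (⌈b⌉ - 1),
        (if hx : a < (x : ℝ) ∧ (x : ℝ) < b then (if x = t then v else 0) else 0) =
        ∑ x ∈ Finset.Ioc ⌊a⌋ (⌈b⌉ - 1),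
        (if hx : a < (x : ℝ) ∧ (x : ℝ) < b then Qdisc a b g ⟨x, hx⟩ else 0) :=
      Finset.sum_congr rfl (fun x hx => by
        have hc := (memIoc a b x).mp hx
        rw [dif_pos hc, dif_pos hc, hpt x hc])
    rw [hδ, sum_Q a b g hab] at key
    exact key
  · -- surjectivity modulo the image of Q
    intro f
    set v := ∑ x ∈ Finset.Ioc ⌊a⌋ (⌈b⌉ - 1),
      (if hx : a < (x : ℝ) ∧ (x : ℝ) < b then f ⟨x, hx⟩ else 0) with hv
    have hsum0 : ∑ x ∈ Finset.Ioc ⌊a⌋ (⌈b⌉ - 1),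
        (if hx : a < (x : ℝ) ∧ (x : ℝ) < b then
          f ⟨x, hx⟩ - (if x = t then v else 0) else 0) = 0 := by
      have hc1 : ∀ x ∈ Finset.Ioc ⌊a⌋ (⌈b⌉ - 1),
          (if hx : a < (x : ℝ) ∧ (x : ℝ) < b then
            f ⟨x, hx⟩ - (if x = t then v else 0) else 0) =
          (if hx : a < (x : ℝ) ∧ (x : ℝ) < b then f ⟨x, hx⟩ else 0) -
            (if x = t then v else 0) := by
        intro x hx
        have hc := (memIoc a b x).mp hx
        rw [dif_pos hc, dif_pos hc]
      rw [Finset.sum_congr rfl hc1, Finset.sum_sub_distrib, ← hv,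
          Finset.sum_ite_eq' _ t (fun _ => v), if_pos htmem, sub_self]
    obtain ⟨g, hg⟩ := exists_g a b (fun x => f x - (if x.1 = t then v else 0)) hsum0
    exact ⟨v, g, fun x => sub_eq_iff_eq_add'.mp (hg x)⟩
  · -- H^{-1} = 0 : Q is injective
    intro g hQ
    have key : ∀ y : ℤ, ⌊a⌋ + 1 ≤ y →
        ∀ hy : a < (y : ℝ) ∧ (y : ℝ) < b - 1, g ⟨y, hy⟩ = 0 := by
      intro y hy
      refine Int.le_induction
        (motive := fun y _ => ∀ hy : a < (y : ℝ) ∧ (y : ℝ) < b - 1, g ⟨y, hy⟩ = 0) ?_ ?_ y hy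
      · intro hy
        have h0 := congrFun hQ ⟨⌊a⌋ + 1, hy.1, by linarith [hy.2]⟩
        simp only [Qdisc, Pi.zero_apply] at h0
        rw [dif_neg (by
          push_neg
          intro hc
          exfalso
          push_cast at hc
          linarith [Int.floor_le a]), dif_pos (by exact hy)] at h0
        simpa using h0
      · intro n hn ih hy
        have h0 := congrFun hQ ⟨n + 1, hy.1, by linarith [hy.2]⟩
        simp only [Qdisc, Pi.zero_apply] at h0
        rw [show (n + 1 - 1 : ℤ) = n by ring, dif_pos hy] at h0
        by_cases hc : a < (n : ℝ) ∧ (n : ℝ) < b - 1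
        · rw [dif_pos hc, ih hc, zero_sub, neg_eq_zero] at h0
          exact h0
        · rw [dif_neg hc, zero_sub, neg_eq_zero] at h0
          exact h0
    funext y
    obtain ⟨y, hy1, hy2⟩ := y
    have : ⌊a⌋ + 1 ≤ y := by
      have := Int.floor_lt.mpr hy1
      omega
    exact key y this ⟨hy1, hy2⟩
  · -- independence of the choice of t
    intro s hs1 hs2 v
    have hsmem : s ∈ Finset.Ioc ⌊a⌋ (⌈b⌉ - 1) := (memIoc a b s).mpr ⟨hs1, hs2⟩
    have hsum0 : ∑ x ∈ Finset.Ioc ⌊a⌋ (⌈b⌉ - 1),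
        (if hx : a < (x : ℝ) ∧ (x : ℝ) < b then
          (if x = t then v else 0) - (if x = s then v else 0) else 0) = 0 := by
      have hc1 : ∀ x ∈ Finset.Ioc ⌊a⌋ (⌈b⌉ - 1),
          (if hx : a < (x : ℝ) ∧ (x : ℝ) < b then
            (if x = t then v else 0) - (if x = s then v else 0) else 0) =
          (if x = t then v else 0) - (if x = s then v else 0) := by
        intro x hx
        rw [dif_pos ((memIoc a b x).mp hx)]
      rw [Finset.sum_congr rfl hc1, Finset.sum_sub_distrib,
          Finset.sum_ite_eq' _ t (fun _ => v), if_pos htmem,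
          Finset.sum_ite_eq' _ s (fun _ => v), if_pos hsmem, sub_self]
    obtain ⟨g, hg⟩ := exists_g a b
      (fun x => (if x.1 = t then v else 0) - (if x.1 = s then v else 0)) hsum0
    exact ⟨g, fun x => hg x⟩
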